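/- Let I be a finite set of integer intervals and R a set of forbidden positions such that every interval in I contains at least one position not in R. The modified greedy algorithm — process intervals by increasing right endpoint, and whenever the current interval [l,r] is not yet hit, add the rightmost position of [l,r] \ R — produces a hitting set disjoint from R of minimum cardinality among all hitting sets of I disjoint from R. -/

import Mathlib

/-- The modified greedy interval-hitting algorithm with restricted positions `R`:
process intervals in order; whenever the current interval `[l, r]` is not yet hit
by the accumulated set `H`, add the rightmost position of `[l, r] \ R` to `H`. -/
noncomputable def greedyHitR (R : Finset ℤ) (H : Finset ℤ) : List (ℤ × ℤ) → Finset ℤ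
  | [] => H
  | (l, r) :: rest =>
      if ((Finset.Icc l r).filter (· ∈ H)).Nonempty then greedyHitR R H rest
      else
        if h : (Finset.Icc l r \ R).Nonempty then
          greedyHitR R (insert ((Finset.Icc l r \ R).max' h) H) rest
        else greedyHitR R H rest

lemma subset_greedyHitR (R : Finset ℤ) (I : List (ℤ × ℤ)) :
    ∀ H : Finset ℤ, H ⊆ greedyHitR R H I := by
  induction I with
  | nil => intro H; simp [greedyHitR]
  | cons p rest ih =>
    obtain ⟨l, r⟩ := p
    intro H
    rw [greedyHitR]
    split
    · exact ih H
    · split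
      · exact (Finset.subset_insert _ _).trans (ih _)
      · exact ih H

lemma greedyHitR_hits (R : Finset ℤ) (I : List (ℤ × ℤ)) :
    ∀ H : Finset ℤ, (∀ p ∈ I, (Finset.Icc p.1 p.2 \ R).Nonempty) →
    ∀ p ∈ I, ∃ x ∈ greedyHitR R H I, p.1 ≤ x ∧ x ≤ p.2 := by
  induction I with
  | nil => intro H _ p hp; simp at hp
  | cons q rest ih =>
    obtain ⟨l, r⟩ := q
    intro H hfeas p hp
    rw [greedyHitR]
    rcases List.mem_cons.mp hp with rfl | hp
    · 
      split
      case isTrue hhit =>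
        obtain ⟨x, hx⟩ := hhit
        simp only [Finset.mem_filter, Finset.mem_Icc] at hx
        exact ⟨x, subset_greedyHitR R rest H hx.2, hx.1.1, hx.1.2⟩
      case isFalse hnot =>
        rw [dif_pos (hfeas (l, r) (List.mem_cons_self))]
        set x := (Finset.Icc l r \ R).max' (hfeas (l, r) (List.mem_cons_self)) with hxdef
        have hxm : x ∈ Finset.Icc l r \ R := Finset.max'_mem _ _
        rw [Finset.mem_sdiff, Finset.mem_Icc] at hxm
        exact ⟨x, subset_greedyHitR R rest _ (Finset.mem_insert_self _ _),
          hxm.1.1, hxm.1.2⟩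
    · have hfeas' : ∀ q ∈ rest, (Finset.Icc q.1 q.2 \ R).Nonempty :=
        fun q hq => hfeas q (List.mem_cons_of_mem _ hq)
      split
      · exact ih H hfeas' p hp
      · split
        · exact ih _ hfeas' p hp
        · exact ih H hfeas' p hp

lemma greedyHitR_disjoint (R : Finset ℤ) (I : List (ℤ × ℤ)) :
    ∀ H : Finset ℤ, Disjoint H R → Disjoint (greedyHitR R H I) R := by
  induction I with
  | nil => intro H h; simpa [greedyHitR] using h
  | cons q rest ih =>
    obtain ⟨l, r⟩ := q
    intro H hd
    rw [greedyHitR]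
    split
    · exact ih H hd
    · split
      case isTrue h =>
        apply ih
        have hxm := Finset.max'_mem _ h
        rw [Finset.mem_sdiff] at hxm
        rw [Finset.disjoint_left]
        intro a ha
        rcases Finset.mem_insert.mp ha with rfl | ha
        · exact hxm.2
        · exact (Finset.disjoint_left.mp hd) ha
      · exact ih H hd

lemma greedyHitR_card (R : Finset ℤ) (I : List (ℤ × ℤ)) :
    ∀ (H : Finset ℤ) (b : ℤ) (H' : Finset ℤ),
    I.Pairwise (fun p q => p.2 ≤ q.2) →
    (∀ p ∈ I, (Finset.Icc p.1 p.2 \ R).Nonempty) →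
    (∀ z ∈ H, z ≤ b) →
    (∀ p ∈ I, ¬((Finset.Icc p.1 p.2).filter (· ∈ H)).Nonempty → b < p.1) →
    (∀ p ∈ I, ∃ x ∈ H', p.1 ≤ x ∧ x ≤ p.2) →
    Disjoint H' R →
    (greedyHitR R H I).card ≤ H.card + (H'.filter (fun y => b < y)).card := by
  induction I with
  | nil =>
    intro H b H' _ _ _ _ _ _
    simp [greedyHitR]
  | cons q rest ih =>
    obtain ⟨l, r⟩ := q
    intro H b H' hsorted hfeas h1 h2 hhit hd
    have hsorted' := hsorted.tail
    have hfeas' : ∀ q ∈ rest, (Finset.Icc q.1 q.2 \ R).Nonempty :=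
      fun q hq => hfeas q (List.mem_cons_of_mem _ hq)
    have hhit' : ∀ q ∈ rest, ∃ x ∈ H', q.1 ≤ x ∧ x ≤ q.2 :=
      fun q hq => hhit q (List.mem_cons_of_mem _ hq)
    rw [greedyHitR]
    split
    case isTrue hhitH =>
      exact ih H b H' hsorted' hfeas' h1
        (fun q hq => h2 q (List.mem_cons_of_mem _ hq)) hhit' hd
    case isFalse hnot =>
      have hne := hfeas (l, r) (List.mem_cons_self)
      rw [dif_pos hne]
      set x := (Finset.Icc l r \ R).max' hne with hxdef
      have hxm : x ∈ Finset.Icc l r \ R := Finset.max'_mem _ _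
      rw [Finset.mem_sdiff, Finset.mem_Icc] at hxm
      obtain ⟨⟨hlx, hxr⟩, hxR⟩ := hxm
      have hbl : b < l := h2 (l, r) (List.mem_cons_self) hnot
      have hxH : x ∉ H := by
        intro hxH
        exact hnot ⟨x, Finset.mem_filter.mpr ⟨Finset.mem_Icc.mpr ⟨hlx, hxr⟩, hxH⟩⟩
      -- hypotheses for the IH with H₁ = insert x H and bound x
      have h1' : ∀ z ∈ insert x H, z ≤ x := by
        intro z hz
        rcases Finset.mem_insert.mp hz with rfl | hz
        · exact le_refl _
        · exact le_trans (h1 z hz) (le_trans hbl.le hlx)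
      have h2' : ∀ q ∈ rest,
          ¬((Finset.Icc q.1 q.2).filter (· ∈ insert x H)).Nonempty → x < q.1 := by
        intro q hq hqn
        by_contra hcon
        push_neg at hcon
        have hrq : r ≤ q.2 := (List.rel_of_pairwise_cons hsorted hq)
        exact hqn ⟨x, Finset.mem_filter.mpr
          ⟨Finset.mem_Icc.mpr ⟨hcon, le_trans hxr hrq⟩, Finset.mem_insert_self _ _⟩⟩
      have hIH := ih (insert x H) x H' hsorted' hfeas' h1' h2' hhit' hd
      -- the optimal set pays at least one point y with b < y ≤ x
      obtain ⟨y, hyH', hly, hyr⟩ := hhit (l, r) (List.mem_cons_self)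
      have hyR : y ∉ R := Finset.disjoint_left.mp hd hyH'
      have hyx : y ≤ x :=
        Finset.le_max' _ y (Finset.mem_sdiff.mpr ⟨Finset.mem_Icc.mpr ⟨hly, hyr⟩, hyR⟩)
      have hby : b < y := lt_of_lt_of_le hbl hly
      have hsub : insert y (H'.filter (fun z => x < z)) ⊆ H'.filter (fun z => b < z) := by
        intro z hz
        rcases Finset.mem_insert.mp hz with rfl | hz
        · exact Finset.mem_filter.mpr ⟨hyH', hby⟩
        · rw [Finset.mem_filter] at hz ⊢
          exact ⟨hz.1, lt_of_le_of_lt (le_trans hbl.le hlx) hz.2⟩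
      have hynot : y ∉ H'.filter (fun z => x < z) := by
        rw [Finset.mem_filter]
        push_neg
        intro _
        exact hyx
      have hcard : (H'.filter (fun z => x < z)).card + 1 ≤
          (H'.filter (fun z => b < z)).card := by
        have := Finset.card_le_card hsub
        rwa [Finset.card_insert_of_notMem hynot] at this
      calc (greedyHitR R (insert x H) rest).card
          ≤ (insert x H).card + (H'.filter (fun z => x < z)).card := hIH
        _ = H.card + 1 + (H'.filter (fun z => x < z)).card := by
            rw [Finset.card_insert_of_notMem hxH]
        _ ≤ H.card + (H'.filter (fun z => b < z)).card := by omega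

lemma foldr_min_le (a x : ℤ) : ∀ L : List ℤ, x ∈ L → L.foldr min a ≤ x := by
  intro L
  induction L with
  | nil => intro h; simp at h
  | cons y t ih =>
    intro hx
    rcases List.mem_cons.mp hx with rfl | hx
    · exact min_le_left _ _
    · exact le_trans (min_le_right _ _) (ih hx)

/-- If every interval contains a position outside `R`, the modified greedy algorithm
produces a hitting set disjoint from `R` of minimum cardinality among all hitting
sets disjoint from `R`. -/
theorem greedy_restricted_hitting_set_minimal
    (I : List (ℤ × ℤ)) (hI : ∀ p ∈ I, p.1 ≤ p.2)
    (hsorted : I.Pairwise (fun p q => p.2 ≤ q.2))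
    (R : Finset ℤ) (hfeas : ∀ p ∈ I, (Finset.Icc p.1 p.2 \ R).Nonempty) :
    (∀ p ∈ I, ∃ x ∈ greedyHitR R ∅ I, p.1 ≤ x ∧ x ≤ p.2) ∧
    Disjoint (greedyHitR R ∅ I) R ∧
    (∀ H' : Finset ℤ, (∀ p ∈ I, ∃ x ∈ H', p.1 ≤ x ∧ x ≤ p.2) → Disjoint H' R →
      (greedyHitR R ∅ I).card ≤ H'.card) := by
  refine ⟨greedyHitR_hits R I ∅ hfeas, greedyHitR_disjoint R I ∅ (by simp), ?_⟩
  intro H' hhit hd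
  set b : ℤ := ((I.map Prod.fst).foldr min 0) - 1 with hbdef
  have hb : ∀ p ∈ I, b < p.1 := by
    intro p hp
    have : (I.map Prod.fst).foldr min 0 ≤ p.1 :=
      foldr_min_le 0 p.1 _ (List.mem_map_of_mem hp)
    omega
  have := greedyHitR_card R I ∅ b H' hsorted hfeas (by simp)
    (fun p hp _ => hb p hp) hhit hd
  simp only [Finset.card_empty, zero_add] at this
  exact le_trans this (Finset.card_filter_le _ _)
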